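/- For all finite hypergraphs H and H' and all vertices x,y ∈ V(H), a,b ∈ V(H'), the distance in the normal product satisfies d_{H⊠̌H'}((x,a),(y,b)) = max{ d_H(x,y), d_{H'}(a,b) } (in ℕ∞). -/

import Mathlib

/-!
Basic definitions: finite hypergraphs (a finite nonempty vertex set `V`, given by
`[Fintype V] [Nonempty V]`, together with a set of nonempty edges), walks, distance,
connectedness, simplicity, rank, colorings, Helly property, covers,
the various hypergraph products, 2-sections, and graph products.
-/

/-- A hypergraph on a vertex type `V`: a collection of nonempty edges (finite subsets of `V`). -/
structure FinHypergraph (V : Type*) where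
  edges : Set (Finset V)
  nonempty_edges : ∀ e ∈ edges, e.Nonempty

namespace FinHypergraph

variable {V V₁ V₂ : Type*}

/-- There is a walk of length `n` from `u` to `v`: a sequence of vertices `w 0, …, w n`
and edges `f 1, …, f n` with consecutive vertices distinct and both contained
in the corresponding edge. -/
def HasWalk (H : FinHypergraph V) (u v : V) (n : ℕ) : Prop :=
  ∃ (w : Fin (n + 1) → V) (f : Fin n → Finset V),
    w 0 = u ∧ w (Fin.last n) = v ∧
      ∀ i : Fin n, f i ∈ H.edges ∧ w i.castSucc ≠ w i.succ ∧
        w i.castSucc ∈ f i ∧ w i.succ ∈ f i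

/-- The distance between two vertices: the minimum length of a walk joining them,
`⊤ = ∞` if there is none. -/
noncomputable def dist (H : FinHypergraph V) (u v : V) : ℕ∞ :=
  sInf {x : ℕ∞ | ∃ n : ℕ, x = n ∧ H.HasWalk u v n}

/-- A hypergraph is connected if any two vertices are joined by a walk. -/
def Connected (H : FinHypergraph V) : Prop := ∀ u v : V, ∃ n, H.HasWalk u v n

/-- A hypergraph is simple if every edge has at least two vertices and
no edge is contained in another edge. -/
def Simple (H : FinHypergraph V) : Prop :=
  (∀ e ∈ H.edges, 2 ≤ e.card) ∧ ∀ e ∈ H.edges, ∀ f ∈ H.edges, e ⊆ f → e = f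

/-- A hypergraph is loopless if every edge has at least two vertices. -/
def Loopless (H : FinHypergraph V) : Prop := ∀ e ∈ H.edges, 2 ≤ e.card

/-- The rank: the maximum cardinality of an edge. -/
noncomputable def rank (H : FinHypergraph V) : ℕ := sSup (Finset.card '' H.edges)

/-- The anti-rank: the minimum cardinality of an edge. -/
noncomputable def antirank (H : FinHypergraph V) : ℕ := sInf (Finset.card '' H.edges)

/-- A proper coloring: no color class contains an edge. -/
def IsProperColoring (H : FinHypergraph V) {k : ℕ} (c : V → Fin k) : Prop :=
  ∀ e ∈ H.edges, ∀ i : Fin k, ¬ ∀ v ∈ e, c v = i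

/-- A proper strong coloring: a proper coloring in which the vertices of every
edge receive pairwise distinct colors. -/
def IsStrongColoring (H : FinHypergraph V) {k : ℕ} (c : V → Fin k) : Prop :=
  H.IsProperColoring c ∧ ∀ e ∈ H.edges, ∀ u ∈ e, ∀ v ∈ e, u ≠ v → c u ≠ c v

/-- The chromatic number: the least `k` admitting a proper `k`-coloring. -/
noncomputable def chromaticNumber (H : FinHypergraph V) : ℕ :=
  sInf {k : ℕ | ∃ c : V → Fin k, H.IsProperColoring c}

/-- The strong chromatic number: the least `k` admitting a proper strong `k`-coloring. -/
noncomputable def strongChromaticNumber (H : FinHypergraph V) : ℕ :=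
  sInf {k : ℕ | ∃ c : V → Fin k, H.IsStrongColoring c}

/-- The Helly property: every intersecting family of edges is a star. -/
def Helly (H : FinHypergraph V) : Prop :=
  ∀ E' ⊆ H.edges, (∀ e ∈ E', ∀ f ∈ E', ∃ x, x ∈ e ∧ x ∈ f) → ∃ v, ∀ e ∈ E', v ∈ e

/-- The covering number: the minimum cardinality of a set of vertices meeting every edge. -/
noncomputable def coverNumber (H : FinHypergraph V) : ℕ :=
  sInf {k : ℕ | ∃ T : Finset V, T.card = k ∧ ∀ e ∈ H.edges, ∃ v ∈ T, v ∈ e}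

/-- The Cartesian product of hypergraphs. -/
def cartProd (H₁ : FinHypergraph V₁) (H₂ : FinHypergraph V₂) : FinHypergraph (V₁ × V₂) where
  edges := {E | (∃ x, ∃ f ∈ H₂.edges, E = {x} ×ˢ f) ∨ ∃ e ∈ H₁.edges, ∃ y, E = e ×ˢ {y}}
  nonempty_edges := by
    rintro E (⟨x, f, hf, rfl⟩ | ⟨e, he, y, rfl⟩)
    · exact (Finset.singleton_nonempty x).product (H₂.nonempty_edges f hf)
    · exact (H₁.nonempty_edges e he).product (Finset.singleton_nonempty y)

section Products

variable [DecidableEq V₁] [DecidableEq V₂]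

/-- The minimal-rank-preserving direct product `H₁ ×̌ H₂`. -/
def minDirProd (H₁ : FinHypergraph V₁) (H₂ : FinHypergraph V₂) : FinHypergraph (V₁ × V₂) where
  edges := {E | ∃ e₁ ∈ H₁.edges, ∃ e₂ ∈ H₂.edges,
    E ⊆ e₁ ×ˢ e₂ ∧ E.card = min e₁.card e₂.card ∧
      (E.image Prod.fst).card = min e₁.card e₂.card ∧
      (E.image Prod.snd).card = min e₁.card e₂.card}
  nonempty_edges := by
    rintro E ⟨e₁, h₁, e₂, h₂, -, hc, -, -⟩
    rw [← Finset.card_pos, hc]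
    exact lt_min (Finset.card_pos.mpr (H₁.nonempty_edges e₁ h₁))
      (Finset.card_pos.mpr (H₂.nonempty_edges e₂ h₂))

/-- The maximal-rank-preserving direct product `H₁ ×̂ H₂`. -/
def maxDirProd (H₁ : FinHypergraph V₁) (H₂ : FinHypergraph V₂) : FinHypergraph (V₁ × V₂) where
  edges := {E | ∃ e₁ ∈ H₁.edges, ∃ e₂ ∈ H₂.edges,
    E ⊆ e₁ ×ˢ e₂ ∧ E.card = max e₁.card e₂.card ∧
      E.image Prod.fst = e₁ ∧ E.image Prod.snd = e₂}
  nonempty_edges := by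
    rintro E ⟨e₁, h₁, e₂, h₂, -, hc, -, -⟩
    rw [← Finset.card_pos, hc]
    exact lt_max_iff.mpr (Or.inl (Finset.card_pos.mpr (H₁.nonempty_edges e₁ h₁)))

/-- The non-rank-preserving direct product `H₁ ×̃ H₂`. -/
def nrDirProd (H₁ : FinHypergraph V₁) (H₂ : FinHypergraph V₂) : FinHypergraph (V₁ × V₂) where
  edges := {E | ∃ e ∈ H₁.edges, ∃ f ∈ H₂.edges, ∃ x ∈ e, ∃ y ∈ f,
    E = insert (x, y) ((e.erase x) ×ˢ (f.erase y))}
  nonempty_edges := by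
    rintro E ⟨e, -, f, -, x, -, y, -, rfl⟩
    exact Finset.insert_nonempty _ _

/-- The normal product `H₁ ⊠̌ H₂`: union of the Cartesian product edges and the
minimal-rank-preserving direct product edges. -/
def normalProd (H₁ : FinHypergraph V₁) (H₂ : FinHypergraph V₂) : FinHypergraph (V₁ × V₂) where
  edges := (H₁.cartProd H₂).edges ∪ (H₁.minDirProd H₂).edges
  nonempty_edges := by
    rintro E (h | h)
    · exact (H₁.cartProd H₂).nonempty_edges E h
    · exact (H₁.minDirProd H₂).nonempty_edges E h

/-- The strong product `H₁ ⊠̂ H₂`: union of the Cartesian product edges and the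
maximal-rank-preserving direct product edges. -/
def strongProd (H₁ : FinHypergraph V₁) (H₂ : FinHypergraph V₂) : FinHypergraph (V₁ × V₂) where
  edges := (H₁.cartProd H₂).edges ∪ (H₁.maxDirProd H₂).edges
  nonempty_edges := by
    rintro E (h | h)
    · exact (H₁.cartProd H₂).nonempty_edges E h
    · exact (H₁.maxDirProd H₂).nonempty_edges E h

/-- The lexicographic product `H₁ ∘ H₂`. -/
def lexProd (H₁ : FinHypergraph V₁) (H₂ : FinHypergraph V₂) : FinHypergraph (V₁ × V₂) where
  edges := {E | (E.image Prod.fst ∈ H₁.edges ∧ (E.image Prod.fst).card = E.card) ∨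
    ∃ x, ∃ e₂ ∈ H₂.edges, E = {x} ×ˢ e₂}
  nonempty_edges := by
    rintro E (⟨h₁, hc⟩ | ⟨x, e₂, h₂, rfl⟩)
    · rw [← Finset.card_pos, ← hc]
      exact Finset.card_pos.mpr (H₁.nonempty_edges _ h₁)
    · exact (Finset.singleton_nonempty x).product (H₂.nonempty_edges e₂ h₂)

end Products

/-- The square product `H₁ ■ H₂`. -/
def squareProd (H₁ : FinHypergraph V₁) (H₂ : FinHypergraph V₂) : FinHypergraph (V₁ × V₂) where
  edges := {E | ∃ e₁ ∈ H₁.edges, ∃ e₂ ∈ H₂.edges, E = e₁ ×ˢ e₂}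
  nonempty_edges := by
    rintro E ⟨e₁, h₁, e₂, h₂, rfl⟩
    exact (H₁.nonempty_edges e₁ h₁).product (H₂.nonempty_edges e₂ h₂)

/-- The 2-section of a hypergraph: distinct vertices are adjacent iff they lie
in a common edge. -/
def twoSection (H : FinHypergraph V) : SimpleGraph V where
  Adj x y := x ≠ y ∧ ∃ e ∈ H.edges, x ∈ e ∧ y ∈ e
  symm := by refine ⟨?_⟩; rintro x y ⟨hxy, e, he, hx, hy⟩; exact ⟨hxy.symm, e, he, hy, hx⟩
  loopless := by refine ⟨?_⟩; rintro x ⟨hx, -⟩; exact hx rfl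

end FinHypergraph

namespace SimpleGraph

variable {V₁ V₂ : Type*}

/-- The direct (tensor) product of simple graphs. -/
def directProd (G₁ : SimpleGraph V₁) (G₂ : SimpleGraph V₂) : SimpleGraph (V₁ × V₂) where
  Adj x y := G₁.Adj x.1 y.1 ∧ G₂.Adj x.2 y.2
  symm := ⟨fun _ _ ⟨h₁, h₂⟩ => ⟨h₁.symm, h₂.symm⟩⟩
  loopless := ⟨fun x h => G₁.loopless.irrefl x.1 h.1⟩

/-- The strong product of simple graphs. -/
def strongGraphProd (G₁ : SimpleGraph V₁) (G₂ : SimpleGraph V₂) : SimpleGraph (V₁ × V₂) where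
  Adj x y := x ≠ y ∧ ((x.1 = y.1 ∧ G₂.Adj x.2 y.2) ∨ (x.2 = y.2 ∧ G₁.Adj x.1 y.1) ∨
    (G₁.Adj x.1 y.1 ∧ G₂.Adj x.2 y.2))
  symm := by
    refine ⟨?_⟩
    rintro x y ⟨hne, (⟨h, h'⟩ | ⟨h, h'⟩ | ⟨h, h'⟩)⟩
    · exact ⟨hne.symm, Or.inl ⟨h.symm, h'.symm⟩⟩
    · exact ⟨hne.symm, Or.inr (Or.inl ⟨h.symm, h'.symm⟩)⟩
    · exact ⟨hne.symm, Or.inr (Or.inr ⟨h.symm, h'.symm⟩)⟩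
  loopless := by refine ⟨?_⟩; rintro x ⟨hx, -⟩; exact hx rfl

/-- The lexicographic product of simple graphs. -/
def lexGraphProd (G₁ : SimpleGraph V₁) (G₂ : SimpleGraph V₂) : SimpleGraph (V₁ × V₂) where
  Adj x y := G₁.Adj x.1 y.1 ∨ (x.1 = y.1 ∧ G₂.Adj x.2 y.2)
  symm := by
    refine ⟨?_⟩
    rintro x y (h | ⟨h, h'⟩)
    · exact Or.inl h.symm
    · exact Or.inr ⟨h.symm, h'.symm⟩
  loopless := by
    refine ⟨?_⟩
    rintro x (h | ⟨-, h⟩)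
    · exact G₁.loopless.irrefl x.1 h
    · exact G₂.loopless.irrefl x.2 h

end SimpleGraph


namespace FinHypergraph

variable {V V₁ V₂ : Type*}

theorem hasWalk_zero {H : FinHypergraph V} {u v : V} : H.HasWalk u v 0 ↔ u = v := by
  constructor
  · rintro ⟨w, f, h0, hl, -⟩
    rw [← h0, ← hl, Fin.last_zero]
  · rintro rfl
    exact ⟨fun _ => u, Fin.elim0, rfl, rfl, fun i => i.elim0⟩

theorem hasWalk_succ_iff {H : FinHypergraph V} {u v : V} {n : ℕ} :
    H.HasWalk u v (n + 1) ↔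
      ∃ v' e, H.HasWalk u v' n ∧ e ∈ H.edges ∧ v' ≠ v ∧ v' ∈ e ∧ v ∈ e := by
  constructor
  · rintro ⟨w, f, h0, hl, hstep⟩
    obtain ⟨he, hne, hm1, hm2⟩ := hstep (Fin.last n)
    refine ⟨w (Fin.last n).castSucc, f (Fin.last n),
      ⟨w ∘ Fin.castSucc, f ∘ Fin.castSucc, ?_, rfl, ?_⟩, he, ?_, hm1, ?_⟩
    · simpa using h0
    · intro i
      obtain ⟨he', hne', h1', h2'⟩ := hstep i.castSucc
      refine ⟨he', ?_, ?_, ?_⟩ <;> simp only [Function.comp_apply, Fin.succ_castSucc] <;>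
        [exact hne'; exact h1'; exact h2']
    · rwa [Fin.succ_last, hl] at hne
    · rwa [Fin.succ_last, hl] at hm2
  · rintro ⟨v', e, ⟨w, f, h0, hl, hstep⟩, he, hne, hv', hv⟩
    refine ⟨Fin.snoc w v, Fin.snoc f e, ?_, by simp, ?_⟩
    · simpa [Fin.snoc] using h0
    · intro i
      refine Fin.lastCases ?_ ?_ i
      · simp only [Fin.snoc_last, Fin.succ_last, Fin.snoc_castSucc]
        exact ⟨he, by rwa [hl], by rwa [hl], hv⟩
      · intro j
        obtain ⟨he', hne', h1', h2'⟩ := hstep j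
        simp only [Fin.snoc_castSucc, Fin.succ_castSucc]
        exact ⟨he', by simpa [Fin.snoc_castSucc] using hne', by simpa using h1',
          by simpa using h2'⟩

end FinHypergraph
namespace FinHypergraph

theorem dist_le_of_hasWalk {H : FinHypergraph V} {u v : V} {n : ℕ} (h : H.HasWalk u v n) :
    H.dist u v ≤ (n : ℕ∞) :=
  sInf_le ⟨n, rfl, h⟩

theorem exists_hasWalk_of_dist_ne_top {H : FinHypergraph V} {u v : V} (h : H.dist u v ≠ ⊤) :
    ∃ n : ℕ, H.dist u v = (n : ℕ∞) ∧ H.HasWalk u v n := by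
  have hne : {x : ℕ∞ | ∃ n : ℕ, x = n ∧ H.HasWalk u v n}.Nonempty := by
    by_contra hc
    rw [Set.not_nonempty_iff_eq_empty] at hc
    exact h (by rw [dist, hc, sInf_empty])
  obtain ⟨n, hn, hw⟩ := csInf_mem hne
  exact ⟨n, hn, hw⟩

theorem hasWalk_append {H : FinHypergraph V} {u v w : V} {m k : ℕ}
    (h1 : H.HasWalk u v m) (h2 : H.HasWalk v w k) : H.HasWalk u w (m + k) := by
  induction k generalizing w with
  | zero => rwa [hasWalk_zero.mp h2] at h1
  | succ k ih =>
    obtain ⟨w', e, hw', he, hne, h1', h2'⟩ := hasWalk_succ_iff.mp h2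
    exact hasWalk_succ_iff.mpr ⟨w', e, ih hw', he, hne, h1', h2'⟩

theorem hasWalk_split {H : FinHypergraph V} {u v : V} {n k : ℕ}
    (h : H.HasWalk u v (n + k)) : ∃ c, H.HasWalk u c n ∧ H.HasWalk c v k := by
  induction k generalizing v with
  | zero => exact ⟨v, h, hasWalk_zero.mpr rfl⟩
  | succ k ih =>
    obtain ⟨v', e, hw', he, hne, h1', h2'⟩ := hasWalk_succ_iff.mp h
    obtain ⟨c, hc1, hc2⟩ := ih hw'
    exact ⟨c, hc1, hasWalk_succ_iff.mpr ⟨v', e, hc2, he, hne, h1', h2'⟩⟩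

section Prod

variable [DecidableEq V₁] [DecidableEq V₂] {H₁ : FinHypergraph V₁} {H₂ : FinHypergraph V₂}

theorem edge_fst {E : Finset (V₁ × V₂)} (hE : E ∈ (H₁.normalProd H₂).edges)
    {p q : V₁ × V₂} (hp : p ∈ E) (hq : q ∈ E) :
    p.1 = q.1 ∨ ∃ e ∈ H₁.edges, p.1 ∈ e ∧ q.1 ∈ e := by
  rcases hE with (⟨x, f, hf, rfl⟩ | ⟨e, he, y, rfl⟩) | ⟨e₁, he₁, e₂, he₂, hsub, -⟩
  · rw [Finset.mem_product] at hp hq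
    left
    rw [Finset.mem_singleton.mp hp.1, Finset.mem_singleton.mp hq.1]
  · rw [Finset.mem_product] at hp hq
    exact Or.inr ⟨e, he, hp.1, hq.1⟩
  · have hp' := Finset.mem_product.mp (hsub hp)
    have hq' := Finset.mem_product.mp (hsub hq)
    exact Or.inr ⟨e₁, he₁, hp'.1, hq'.1⟩

theorem edge_snd {E : Finset (V₁ × V₂)} (hE : E ∈ (H₁.normalProd H₂).edges)
    {p q : V₁ × V₂} (hp : p ∈ E) (hq : q ∈ E) :
    p.2 = q.2 ∨ ∃ e ∈ H₂.edges, p.2 ∈ e ∧ q.2 ∈ e := by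
  rcases hE with (⟨x, f, hf, rfl⟩ | ⟨e, he, y, rfl⟩) | ⟨e₁, he₁, e₂, he₂, hsub, -⟩
  · rw [Finset.mem_product] at hp hq
    exact Or.inr ⟨f, hf, hp.2, hq.2⟩
  · rw [Finset.mem_product] at hp hq
    left
    rw [Finset.mem_singleton.mp hp.2, Finset.mem_singleton.mp hq.2]
  · have hp' := Finset.mem_product.mp (hsub hp)
    have hq' := Finset.mem_product.mp (hsub hq)
    exact Or.inr ⟨e₂, he₂, hp'.2, hq'.2⟩

theorem proj_fst {p q : V₁ × V₂} {n : ℕ} (h : (H₁.normalProd H₂).HasWalk p q n) :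
    ∃ m ≤ n, H₁.HasWalk p.1 q.1 m := by
  induction n generalizing q with
  | zero => exact ⟨0, le_refl 0, hasWalk_zero.mpr (by rw [hasWalk_zero.mp h])⟩
  | succ n ih =>
    obtain ⟨q', E, hw, hE, hne, h1, h2⟩ := hasWalk_succ_iff.mp h
    obtain ⟨m, hm, hwm⟩ := ih hw
    rcases edge_fst hE h1 h2 with heq | ⟨e, he, hm1, hm2⟩
    · exact ⟨m, le_trans hm (Nat.le_succ n), heq ▸ hwm⟩
    · by_cases hq : q'.1 = q.1
      · exact ⟨m, le_trans hm (Nat.le_succ n), hq ▸ hwm⟩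
      · exact ⟨m + 1, Nat.succ_le_succ hm,
          hasWalk_succ_iff.mpr ⟨q'.1, e, hwm, he, hq, hm1, hm2⟩⟩

theorem proj_snd {p q : V₁ × V₂} {n : ℕ} (h : (H₁.normalProd H₂).HasWalk p q n) :
    ∃ m ≤ n, H₂.HasWalk p.2 q.2 m := by
  induction n generalizing q with
  | zero => exact ⟨0, le_refl 0, hasWalk_zero.mpr (by rw [hasWalk_zero.mp h])⟩
  | succ n ih =>
    obtain ⟨q', E, hw, hE, hne, h1, h2⟩ := hasWalk_succ_iff.mp h
    obtain ⟨m, hm, hwm⟩ := ih hw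
    rcases edge_snd hE h1 h2 with heq | ⟨e, he, hm1, hm2⟩
    · exact ⟨m, le_trans hm (Nat.le_succ n), heq ▸ hwm⟩
    · by_cases hq : q'.2 = q.2
      · exact ⟨m, le_trans hm (Nat.le_succ n), hq ▸ hwm⟩
      · exact ⟨m + 1, Nat.succ_le_succ hm,
          hasWalk_succ_iff.mpr ⟨q'.2, e, hwm, he, hq, hm1, hm2⟩⟩

theorem embed_snd {a b : V₂} {n : ℕ} (x : V₁) (h : H₂.HasWalk a b n) :
    (H₁.normalProd H₂).HasWalk (x, a) (x, b) n := by
  induction n generalizing b with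
  | zero => rw [hasWalk_zero.mp h]; exact hasWalk_zero.mpr rfl
  | succ n ih =>
    obtain ⟨b', f, hw, hf, hne, h1, h2⟩ := hasWalk_succ_iff.mp h
    refine hasWalk_succ_iff.mpr ⟨(x, b'), {x} ×ˢ f, ih hw, Or.inl (Or.inl ⟨x, f, hf, rfl⟩),
      fun hc => hne (congrArg Prod.snd hc), ?_, ?_⟩ <;>
      simp [Finset.mem_product, h1, h2]

theorem embed_fst {x y : V₁} {n : ℕ} (a : V₂) (h : H₁.HasWalk x y n) :
    (H₁.normalProd H₂).HasWalk (x, a) (y, a) n := by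
  induction n generalizing y with
  | zero => rw [hasWalk_zero.mp h]; exact hasWalk_zero.mpr rfl
  | succ n ih =>
    obtain ⟨y', e, hw, he, hne, h1, h2⟩ := hasWalk_succ_iff.mp h
    refine hasWalk_succ_iff.mpr ⟨(y', a), e ×ˢ {a}, ih hw, Or.inl (Or.inr ⟨e, he, a, rfl⟩),
      fun hc => hne (congrArg Prod.fst hc), ?_, ?_⟩ <;>
      simp [Finset.mem_product, h1, h2]

theorem diag_edge {e₁ : Finset V₁} {e₂ : Finset V₂} {u v : V₁} {c d : V₂}
    (he₁ : e₁ ∈ H₁.edges) (he₂ : e₂ ∈ H₂.edges)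
    (hu : u ∈ e₁) (hv : v ∈ e₁) (hc : c ∈ e₂) (hd : d ∈ e₂)
    (huv : u ≠ v) (hcd : c ≠ d) :
    ∃ E ∈ (H₁.minDirProd H₂).edges, (u, c) ∈ E ∧ (v, d) ∈ E := by
  set m := min e₁.card e₂.card with hm
  have hm2 : 2 ≤ m :=
    le_min (Finset.one_lt_card.mpr ⟨u, hu, v, hv, huv⟩)
      (Finset.one_lt_card.mpr ⟨c, hc, d, hd, hcd⟩)
  have huv₁ : ({u, v} : Finset V₁) ⊆ e₁ := by
    intro z hz; rcases Finset.mem_insert.mp hz with rfl | hz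
    · exact hu
    · exact (Finset.mem_singleton.mp hz) ▸ hv
  have hcd₂ : ({c, d} : Finset V₂) ⊆ e₂ := by
    intro z hz; rcases Finset.mem_insert.mp hz with rfl | hz
    · exact hc
    · exact (Finset.mem_singleton.mp hz) ▸ hd
  have hcard₁ : (e₁ \ {u, v}).card = e₁.card - 2 := by
    rw [Finset.card_sdiff_of_subset huv₁, Finset.card_pair huv]
  have hcard₂ : (e₂ \ {c, d}).card = e₂.card - 2 := by
    rw [Finset.card_sdiff_of_subset hcd₂, Finset.card_pair hcd]
  have hmle₁ : m ≤ e₁.card := min_le_left _ _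
  have hmle₂ : m ≤ e₂.card := min_le_right _ _
  obtain ⟨S, hS, hScard⟩ := Finset.exists_subset_card_eq
    (show m - 2 ≤ (e₁ \ {u, v}).card by rw [hcard₁]; omega)
  obtain ⟨T, hT, hTcard⟩ := Finset.exists_subset_card_eq
    (show m - 2 ≤ (e₂ \ {c, d}).card by rw [hcard₂]; omega)
  have hST : S.card = T.card := hScard.trans hTcard.symm
  let g : {z // z ∈ S} ≃ {z // z ∈ T} := S.equivOfCardEq hST
  set D : Finset (V₁ × V₂) := S.attach.image (fun s => (s.1, (g s).1)) with hD
  have hDfst : ∀ p ∈ D, p.1 ∈ S := by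
    intro p hp
    obtain ⟨s, -, rfl⟩ := Finset.mem_image.mp hp
    exact s.2
  have hDsnd : ∀ p ∈ D, p.2 ∈ T := by
    intro p hp
    obtain ⟨s, -, rfl⟩ := Finset.mem_image.mp hp
    exact (g s).2
  have huS : u ∉ S := fun h => ((Finset.mem_sdiff.mp (hS h)).2 (Finset.mem_insert_self u _))
  have hvS : v ∉ S := fun h =>
    ((Finset.mem_sdiff.mp (hS h)).2 (Finset.mem_insert_of_mem (Finset.mem_singleton_self v)))
  have hcT : c ∉ T := fun h => ((Finset.mem_sdiff.mp (hT h)).2 (Finset.mem_insert_self c _))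
  have hdT : d ∉ T := fun h =>
    ((Finset.mem_sdiff.mp (hT h)).2 (Finset.mem_insert_of_mem (Finset.mem_singleton_self d)))
  set E : Finset (V₁ × V₂) := insert (u, c) (insert (v, d) D) with hE
  have hvdD : (v, d) ∉ D := fun h => hvS (hDfst _ h)
  have hucD : (u, c) ∉ insert (v, d) D := by
    rw [Finset.mem_insert]
    rintro (h | h)
    · exact huv (congrArg Prod.fst h)
    · exact huS (hDfst _ h)
  have hDcard : D.card = m - 2 := by
    rw [hD, Finset.card_image_of_injective _
      (fun s t h => Subtype.ext (congrArg Prod.fst h)), Finset.card_attach, hScard]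
  have hEcard : E.card = m := by
    rw [hE, Finset.card_insert_of_notMem hucD, Finset.card_insert_of_notMem hvdD, hDcard]
    omega
  have hEsub : E ⊆ e₁ ×ˢ e₂ := by
    intro p hp
    rw [Finset.mem_product]
    rcases Finset.mem_insert.mp hp with rfl | hp
    · exact ⟨hu, hc⟩
    rcases Finset.mem_insert.mp hp with rfl | hp
    · exact ⟨hv, hd⟩
    · exact ⟨(Finset.mem_sdiff.mp (hS (hDfst _ hp))).1,
        (Finset.mem_sdiff.mp (hT (hDsnd _ hp))).1⟩
  have hfstim : E.image Prod.fst = insert u (insert v S) := by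
    rw [hE, Finset.image_insert, Finset.image_insert]
    congr 1
    congr 1
    rw [hD, Finset.image_image]
    exact Finset.attach_image_val
  have hfstcard : (E.image Prod.fst).card = m := by
    rw [hfstim, Finset.card_insert_of_notMem (by
        rw [Finset.mem_insert]; rintro (h | h); exact huv h; exact huS h),
      Finset.card_insert_of_notMem hvS, hScard]
    omega
  have hsndim : E.image Prod.snd = insert c (insert d (S.attach.image (fun s => (g s).1))) := by
    rw [hE, Finset.image_insert, Finset.image_insert, hD, Finset.image_image]
    rfl
  have hsndcard : (E.image Prod.snd).card = m := by
    have himT : ∀ z ∈ S.attach.image (fun s => (g s).1), z ∈ T := by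
      intro z hz
      obtain ⟨s, -, rfl⟩ := Finset.mem_image.mp hz
      exact (g s).2
    have hcard' : (S.attach.image (fun s => (g s).1)).card = m - 2 := by
      rw [Finset.card_image_of_injective _
        (fun s t h => g.injective (Subtype.ext h)), Finset.card_attach, hScard]
    rw [hsndim, Finset.card_insert_of_notMem (by
        rw [Finset.mem_insert]
        rintro (h | h)
        · exact hcd h
        · exact hcT (himT _ h)),
      Finset.card_insert_of_notMem (fun h => hdT (himT _ h)), hcard']
    omega
  exact ⟨E, ⟨e₁, he₁, e₂, he₂, hEsub, hEcard, hfstcard, hsndcard⟩,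
    Finset.mem_insert_self _ _,
    Finset.mem_insert_of_mem (Finset.mem_insert_self _ _)⟩

end Prod

end FinHypergraph
namespace FinHypergraph

variable {V₁ V₂ : Type*} [DecidableEq V₁] [DecidableEq V₂]
variable {H₁ : FinHypergraph V₁} {H₂ : FinHypergraph V₂}

theorem diag_walk {x y : V₁} {a b : V₂} {n : ℕ}
    (h1 : H₁.HasWalk x y n) (h2 : H₂.HasWalk a b n) :
    (H₁.normalProd H₂).HasWalk (x, a) (y, b) n := by
  induction n generalizing y b with
  | zero => rw [hasWalk_zero.mp h1, hasWalk_zero.mp h2]; exact hasWalk_zero.mpr rfl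
  | succ n ih =>
    obtain ⟨y', e₁, hw1, he₁, hne₁, hm1, hm1'⟩ := hasWalk_succ_iff.mp h1
    obtain ⟨b', e₂, hw2, he₂, hne₂, hm2, hm2'⟩ := hasWalk_succ_iff.mp h2
    obtain ⟨E, hE, hpE, hqE⟩ := diag_edge he₁ he₂ hm1 hm1' hm2 hm2' hne₁ hne₂
    exact hasWalk_succ_iff.mpr ⟨(y', b'), E, ih hw1 hw2, Or.inr hE,
      fun hc => hne₁ (congrArg Prod.fst hc), hpE, hqE⟩

theorem combine_walk {x y : V₁} {a b : V₂} {n₁ n₂ : ℕ}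
    (h1 : H₁.HasWalk x y n₁) (h2 : H₂.HasWalk a b n₂) :
    (H₁.normalProd H₂).HasWalk (x, a) (y, b) (max n₁ n₂) := by
  rcases le_total n₁ n₂ with h | h
  · obtain ⟨k, rfl⟩ := Nat.exists_eq_add_of_le h
    obtain ⟨c, hc1, hc2⟩ := hasWalk_split h2
    rw [max_eq_right h]
    exact hasWalk_append (diag_walk h1 hc1) (embed_snd y hc2)
  · obtain ⟨k, rfl⟩ := Nat.exists_eq_add_of_le h
    obtain ⟨c, hc1, hc2⟩ := hasWalk_split h1
    rw [max_eq_left h]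
    exact hasWalk_append (diag_walk hc1 h2) (embed_fst b hc2)

end FinHypergraph

/-- distance formula for the normal product. -/
theorem dist_normalProd {V₁ V₂ : Type*} [Fintype V₁] [Nonempty V₁] [DecidableEq V₁]
    [Fintype V₂] [Nonempty V₂] [DecidableEq V₂] (H₁ : FinHypergraph V₁) (H₂ : FinHypergraph V₂)
    (x y : V₁) (a b : V₂) :
    (H₁.normalProd H₂).dist (x, a) (y, b) = max (H₁.dist x y) (H₂.dist a b) := by
  apply le_antisymm
  · by_cases hd₁ : H₁.dist x y = ⊤
    · rw [hd₁]; simp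
    by_cases hd₂ : H₂.dist a b = ⊤
    · rw [hd₂]; simp
    obtain ⟨n₁, he₁, hw₁⟩ := FinHypergraph.exists_hasWalk_of_dist_ne_top hd₁
    obtain ⟨n₂, he₂, hw₂⟩ := FinHypergraph.exists_hasWalk_of_dist_ne_top hd₂
    calc (H₁.normalProd H₂).dist (x, a) (y, b) ≤ ((max n₁ n₂ : ℕ) : ℕ∞) :=
          FinHypergraph.dist_le_of_hasWalk (FinHypergraph.combine_walk hw₁ hw₂)
      _ = max (H₁.dist x y) (H₂.dist a b) := by
          rw [he₁, he₂]
          rcases le_total n₁ n₂ with h | h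
          · rw [max_eq_right h, max_eq_right (Nat.cast_le.mpr h)]
          · rw [max_eq_left h, max_eq_left (Nat.cast_le.mpr h)]
  · apply max_le
    · apply le_sInf
      rintro _ ⟨n, rfl, hw⟩
      obtain ⟨m, hm, hwm⟩ := FinHypergraph.proj_fst hw
      exact le_trans (FinHypergraph.dist_le_of_hasWalk hwm) (Nat.cast_le.mpr hm)
    · apply le_sInf
      rintro _ ⟨n, rfl, hw⟩
      obtain ⟨m, hm, hwm⟩ := FinHypergraph.proj_snd hw
      exact le_trans (FinHypergraph.dist_le_of_hasWalk hwm) (Nat.cast_le.mpr hm)
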